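/- There exists p ∈ ℝ^d with all entries positive and p_1 = 1 such that for every q ∈ ℝ^d with all entries positive, min_{w ∈ W_d} G(q,w) ≤ min_{w ∈ W_d} G(p,w); that is, the supremum over the positive orthant of the function p ↦ min_{w ∈ W_d} G(p,w) is attained at a point with first coordinate 1. -/
import Mathlib

def wvec (d : ℕ) (j : Fin d) : Fin d → ℕ :=
  fun i => if i < j then 0 else if i = j then (j : ℕ) + 1 else (i : ℕ)

noncomputable def G (d : ℕ) (p : Fin d → ℝ) (w : Fin d → ℕ) : ℝ :=
  (∏ i, p i) / (Real.sqrt (∑ i, ((w i : ℝ)) ^ 2 * p i ^ 2)) ^ d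

noncomputable def minG (d : ℕ) (p : Fin d → ℝ) : ℝ :=
  ⨅ j : Fin d, G d p (wvec d j)

noncomputable def D (d : ℕ) (j : Fin d) (p : Fin d → ℝ) : ℝ :=
  Real.sqrt (∑ i, ((wvec d j i : ℝ)) ^ 2 * p i ^ 2)

/-- `p*`: `p*_1 = 1`, `p*_2 = 1/√3`, `p*_j = √(2/3)/(j−1)` for `3 ≤ j ≤ d`
(0-based: index `i` has 1-based position `i+1`, so the denominator `j−1` is `i`). -/
noncomputable def pstar (d : ℕ) : Fin d → ℝ :=
  fun i => if (i : ℕ) = 0 then 1 else if (i : ℕ) = 1 then 1 / Real.sqrt 3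
    else Real.sqrt (2 / 3) / ((i : ℕ) : ℝ)

lemma amgm (d : ℕ) (hd : 0 < d) (z : Fin d → ℝ) (hz : ∀ i, 0 ≤ z i) :
    (d : ℝ) ^ d * ∏ i, z i ≤ (∑ i, z i) ^ d := by
  have hd' : (0:ℝ) < d := by exact_mod_cast hd
  have h := Real.geom_mean_le_arith_mean_weighted Finset.univ (fun _ => 1 / d) z
    (fun i _ => by positivity) (by simp [Finset.card_univ]; field_simp) (fun i _ => hz i)
  have hprod : ∏ i, z i ^ (1 / (d:ℝ)) = (∏ i, z i) ^ (1 / (d:ℝ)) := by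
    rw [← Real.finset_prod_rpow _ _ (fun i _ => hz i)]
  rw [hprod] at h
  have hsum : ∑ i : Fin d, (1 / (d:ℝ)) * z i = (∑ i, z i) / d := by
    rw [← Finset.mul_sum]; ring
  rw [hsum] at h
  have hz' : 0 ≤ ∏ i, z i := Finset.prod_nonneg fun i _ => hz i
  have h2 := Real.rpow_le_rpow (Real.rpow_nonneg hz' _) h (le_of_lt hd')
  rw [← Real.rpow_mul hz'] at h2
  have he : 1 / (d:ℝ) * d = 1 := by field_simp
  rw [he, Real.rpow_one, Real.rpow_natCast] at h2
  calc (d:ℝ)^d * ∏ i, z i ≤ (d:ℝ)^d * ((∑ i, z i)/d)^d := by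
        apply mul_le_mul_of_nonneg_left h2 (by positivity)
    _ = (∑ i, z i)^d := by rw [div_pow]; field_simp

lemma pstar_pos (d : ℕ) (i : Fin d) : 0 < pstar d i := by
  unfold pstar
  split_ifs with h1 h2
  · norm_num
  · positivity
  · have h0 : 0 < (i : ℕ) := Nat.pos_of_ne_zero h1
    have : (0:ℝ) < ((i:ℕ):ℝ) := by exact_mod_cast h0
    positivity

lemma pstar_sq (d : ℕ) (i : Fin d) :
    (pstar d i) ^ 2 = if (i : ℕ) = 0 then 1 else if (i : ℕ) = 1 then 1/3
      else (2/3) / ((i:ℕ):ℝ) ^ 2 := by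
  unfold pstar
  split_ifs with h1 h2
  · norm_num
  · rw [div_pow, one_pow, Real.sq_sqrt (by norm_num : (3:ℝ) ≥ 0)]
  · rw [div_pow, Real.sq_sqrt (by norm_num : (2/3:ℝ) ≥ 0)]

lemma Sstar_le (d : ℕ) (hd : 2 ≤ d) (j : Fin d) :
    ∑ i, ((wvec d j i : ℝ)) ^ 2 * pstar d i ^ 2 ≤ 2/3 * d := by
  obtain ⟨a0, hv0⟩ : ∃ a : Fin d, (a:ℕ) = 0 := ⟨⟨0, by omega⟩, rfl⟩
  obtain ⟨a1, hv1⟩ : ∃ a : Fin d, (a:ℕ) = 1 := ⟨⟨1, by omega⟩, rfl⟩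
  have hne01 : a0 ≠ a1 := by rw [Ne, Fin.ext_iff]; omega
  rcases Nat.lt_or_ge (j : ℕ) 2 with hj | hj
  · interval_cases hjv : (j : ℕ)
    · -- j.val = 0
      have key : ∀ i : Fin d, ((wvec d j i : ℝ)) ^ 2 * pstar d i ^ 2
          = 2/3 + ((if i = a0 then (1:ℝ)/3 else 0) + (if i = a1 then -(1:ℝ)/3 else 0)) := by
        intro i
        rw [pstar_sq]
        unfold wvec
        by_cases hi0 : (i:ℕ) = 0
        · have e1 : i = a0 := by rw [Fin.ext_iff]; omega
          have e2 : i = j := by rw [Fin.ext_iff]; omega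
          have e3 : ¬ i < j := by rw [Fin.lt_def]; omega
          have e4 : ¬ i = a1 := by rw [Fin.ext_iff]; omega
          simp only [if_neg e3, if_pos e2, if_pos e1, if_neg e4, if_pos hi0, hjv]
          norm_num
        · by_cases hi1 : (i:ℕ) = 1
          · have e1 : ¬ i = a0 := by rw [Fin.ext_iff]; omega
            have e2 : ¬ i = j := by rw [Fin.ext_iff]; omega
            have e3 : ¬ i < j := by rw [Fin.lt_def]; omega
            have e4 : i = a1 := by rw [Fin.ext_iff]; omega
            simp only [if_neg e3, if_neg e2, if_neg e1, if_pos e4, if_neg hi0, if_pos hi1, hi1]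
            norm_num
          · have e1 : ¬ i = a0 := by rw [Fin.ext_iff]; omega
            have e2 : ¬ i = j := by rw [Fin.ext_iff]; omega
            have e3 : ¬ i < j := by rw [Fin.lt_def]; omega
            have e4 : ¬ i = a1 := by rw [Fin.ext_iff]; omega
            simp only [if_neg e3, if_neg e2, if_neg e1, if_neg e4, if_neg hi0, if_neg hi1]
            have : ((i:ℕ):ℝ) ≠ 0 := by exact_mod_cast hi0
            field_simp
            ring
      calc ∑ i, ((wvec d j i : ℝ)) ^ 2 * pstar d i ^ 2
          = ∑ i : Fin d, (2/3 + ((if i = a0 then (1:ℝ)/3 else 0) + (if i = a1 then -(1:ℝ)/3 else 0))) :=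
            Finset.sum_congr rfl (fun i _ => key i)
        _ ≤ 2/3 * d := by
            rw [Finset.sum_add_distrib, Finset.sum_add_distrib, Finset.sum_const,
              Finset.sum_ite_eq' Finset.univ a0 (fun _ => (1:ℝ)/3),
              Finset.sum_ite_eq' Finset.univ a1 (fun _ => -(1:ℝ)/3)]
            simp [Finset.card_univ, nsmul_eq_mul]
            linarith
    · -- j.val = 1
      have key : ∀ i : Fin d, ((wvec d j i : ℝ)) ^ 2 * pstar d i ^ 2
          = 2/3 + ((if i = a0 then -(2:ℝ)/3 else 0) + (if i = a1 then (2:ℝ)/3 else 0)) := by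
        intro i
        rw [pstar_sq]
        unfold wvec
        by_cases hi0 : (i:ℕ) = 0
        · have e1 : i = a0 := by rw [Fin.ext_iff]; omega
          have e3 : i < j := by rw [Fin.lt_def]; omega
          have e4 : ¬ i = a1 := by rw [Fin.ext_iff]; omega
          simp only [if_pos e3, if_pos e1, if_neg e4, if_pos hi0]
          norm_num
        · by_cases hi1 : (i:ℕ) = 1
          · have e1 : ¬ i = a0 := by rw [Fin.ext_iff]; omega
            have e2 : i = j := by rw [Fin.ext_iff]; omega
            have e3 : ¬ i < j := by rw [Fin.lt_def]; omega
            have e4 : i = a1 := by rw [Fin.ext_iff]; omega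
            simp only [if_neg e3, if_pos e2, if_neg e1, if_pos e4, if_neg hi0, if_pos hi1, hjv]
            norm_num
          · have e1 : ¬ i = a0 := by rw [Fin.ext_iff]; omega
            have e2 : ¬ i = j := by rw [Fin.ext_iff]; omega
            have e3 : ¬ i < j := by rw [Fin.lt_def]; omega
            have e4 : ¬ i = a1 := by rw [Fin.ext_iff]; omega
            simp only [if_neg e3, if_neg e2, if_neg e1, if_neg e4, if_neg hi0, if_neg hi1]
            have : ((i:ℕ):ℝ) ≠ 0 := by exact_mod_cast hi0
            field_simp
            ring
      calc ∑ i, ((wvec d j i : ℝ)) ^ 2 * pstar d i ^ 2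
          = ∑ i : Fin d, (2/3 + ((if i = a0 then -(2:ℝ)/3 else 0) + (if i = a1 then (2:ℝ)/3 else 0))) :=
            Finset.sum_congr rfl (fun i _ => key i)
        _ ≤ 2/3 * d := by
            rw [Finset.sum_add_distrib, Finset.sum_add_distrib, Finset.sum_const,
              Finset.sum_ite_eq' Finset.univ a0 (fun _ => -(2:ℝ)/3),
              Finset.sum_ite_eq' Finset.univ a1 (fun _ => (2:ℝ)/3)]
            simp [Finset.card_univ, nsmul_eq_mul]
            linarith
  · -- j.val ≥ 2
    have key : ∀ i : Fin d, ((wvec d j i : ℝ)) ^ 2 * pstar d i ^ 2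
        ≤ 2/3 * ((if i = j then ((j:ℕ):ℝ) else 0) + (if j ≤ i then 1 else 0)) := by
      intro i
      rw [pstar_sq]
      unfold wvec
      rcases lt_trichotomy i j with hlt | heq | hgt
      · have h1 : ¬ (i = j) := ne_of_lt hlt
        have h2 : ¬ (j ≤ i) := not_le_of_gt hlt
        simp [hlt, h1, h2]
      · subst heq
        have h1 : ¬ ((i:ℕ) = 0) := by omega
        have h2 : ¬ ((i:ℕ) = 1) := by omega
        simp only [lt_irrefl, if_false, if_pos rfl, le_refl, if_true, if_neg h1, if_neg h2]
        have hx : (2:ℝ) ≤ ((i:ℕ):ℝ) := by exact_mod_cast hj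
        have hx0 : (0:ℝ) < ((i:ℕ):ℝ) := by linarith
        rw [mul_div_assoc', div_le_iff₀ (by positivity)]
        push_cast
        nlinarith [sq_nonneg (((i:ℕ):ℝ) - 1)]
      · have h0 : ¬ (i < j) := not_lt_of_gt hgt
        have h1 : ¬ (i = j) := (ne_of_lt hgt).symm
        have h2 : j ≤ i := le_of_lt hgt
        have h3 : 2 < (i:ℕ) := lt_of_le_of_lt hj hgt
        have h4 : ¬ ((i:ℕ) = 0) := by omega
        have h5 : ¬ ((i:ℕ) = 1) := by omega
        simp only [h0, h1, if_false, if_pos h2, if_neg h4, if_neg h5]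
        have : ((i:ℕ):ℝ) ≠ 0 := by exact_mod_cast (by omega : (i:ℕ) ≠ 0)
        rw [mul_div_assoc', div_le_iff₀ (by positivity)]
        ring_nf
        rw [mul_comm]
    calc ∑ i, ((wvec d j i : ℝ)) ^ 2 * pstar d i ^ 2
        ≤ ∑ i : Fin d, 2/3 * ((if i = j then ((j:ℕ):ℝ) else 0) + (if j ≤ i then 1 else 0)) :=
          Finset.sum_le_sum (fun i _ => key i)
      _ = 2/3 * d := by
          rw [← Finset.mul_sum, Finset.sum_add_distrib,
            Finset.sum_ite_eq' Finset.univ j (fun _ => ((j:ℕ):ℝ)), Finset.sum_boole]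
          have hfil : (Finset.univ.filter fun i => j ≤ i) = Finset.Ici j := by
            ext i; simp
          rw [hfil, Fin.card_Ici]
          have hjd : (j:ℕ) ≤ d := le_of_lt j.isLt
          simp only [Finset.mem_univ, if_true]
          push_cast [Nat.cast_sub hjd]
          ring
      _ ≤ 2/3 * d := le_refl _

lemma c_pstar (d : ℕ) (a0 a1 : Fin d) (hv0 : (a0:ℕ) = 0) (hv1 : (a1:ℕ) = 1) (i : Fin d) :
    (2/3 * ((wvec d a0 i : ℝ)) ^ 2 + 1/3 * ((wvec d a1 i : ℝ)) ^ 2) * pstar d i ^ 2 = 2/3 := by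
  rw [pstar_sq]
  unfold wvec
  by_cases hi0 : (i:ℕ) = 0
  · have e1 : i = a0 := by rw [Fin.ext_iff]; omega
    have e2 : ¬ i < a0 := by rw [Fin.lt_def]; omega
    have e3 : i < a1 := by rw [Fin.lt_def]; omega
    simp only [if_neg e2, if_pos e1, if_pos e3, if_pos hi0, hv0]
    norm_num
  · by_cases hi1 : (i:ℕ) = 1
    · have e1 : ¬ i = a0 := by rw [Fin.ext_iff]; omega
      have e2 : ¬ i < a0 := by rw [Fin.lt_def]; omega
      have e3 : ¬ i < a1 := by rw [Fin.lt_def]; omega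
      have e4 : i = a1 := by rw [Fin.ext_iff]; omega
      simp only [if_neg e2, if_neg e1, if_neg e3, if_pos e4, if_neg hi0, if_pos hi1, hv1, hi1]
      norm_num
    · have e1 : ¬ i = a0 := by rw [Fin.ext_iff]; omega
      have e2 : ¬ i < a0 := by rw [Fin.lt_def]; omega
      have e3 : ¬ i < a1 := by rw [Fin.lt_def]; omega
      have e4 : ¬ i = a1 := by rw [Fin.ext_iff]; omega
      simp only [if_neg e2, if_neg e1, if_neg e3, if_neg e4, if_neg hi0, if_neg hi1]
      have hne : ((i:ℕ):ℝ) ≠ 0 := by exact_mod_cast hi0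
      field_simp
      ring

lemma S_pos (d : ℕ) (j : Fin d) (q : Fin d → ℝ) (hq : ∀ i, 0 < q i) :
    0 < ∑ i, ((wvec d j i : ℝ)) ^ 2 * q i ^ 2 := by
  apply Finset.sum_pos' (fun i _ => by positivity)
  refine ⟨j, Finset.mem_univ j, ?_⟩
  have hw : wvec d j j = (j:ℕ) + 1 := by unfold wvec; simp
  rw [hw]
  have := hq j
  positivity

lemma sqrt_pow_le_of_sq (S B : ℝ) (hS : 0 ≤ S) (hB : 0 ≤ B) (d : ℕ) (h : S ^ d ≤ B ^ 2) :
    (Real.sqrt S) ^ d ≤ B := by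
  have h1 : ((Real.sqrt S) ^ d) ^ 2 = S ^ d := by
    rw [← pow_mul, mul_comm, pow_mul, Real.sq_sqrt hS]
  nlinarith [pow_nonneg (Real.sqrt_nonneg S) d]

lemma le_sqrt_pow_of_sq (S B : ℝ) (hS : 0 ≤ S) (hB : 0 ≤ B) (d : ℕ) (h : B ^ 2 ≤ S ^ d) :
    B ≤ (Real.sqrt S) ^ d := by
  have h1 : ((Real.sqrt S) ^ d) ^ 2 = S ^ d := by
    rw [← pow_mul, mul_comm, pow_mul, Real.sq_sqrt hS]
  nlinarith [pow_nonneg (Real.sqrt_nonneg S) d]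

/-- The supremum of `p ↦ min_{w ∈ W_d} G(p,w)` over the positive orthant is attained
at a point with first coordinate equal to `1`. -/
theorem stmt3 (d : ℕ) (hd : 2 ≤ d) :
    ∃ p : Fin d → ℝ, (∀ i, 0 < p i) ∧ p ⟨0, by omega⟩ = 1 ∧
      ∀ q : Fin d → ℝ, (∀ i, 0 < q i) → minG d q ≤ minG d p := by
  haveI : Nonempty (Fin d) := ⟨⟨0, by omega⟩⟩
  refine ⟨pstar d, fun i => pstar_pos d i, by simp [pstar], ?_⟩
  intro q hq
  obtain ⟨a0, hv0⟩ : ∃ a : Fin d, (a:ℕ) = 0 := ⟨⟨0, by omega⟩, rfl⟩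
  obtain ⟨a1, hv1⟩ : ∃ a : Fin d, (a:ℕ) = 1 := ⟨⟨1, by omega⟩, rfl⟩
  set c : Fin d → ℝ := fun i => 2/3 * ((wvec d a0 i : ℝ)) ^ 2 + 1/3 * ((wvec d a1 i : ℝ)) ^ 2
    with hc
  have hcp : ∀ i, c i * pstar d i ^ 2 = 2/3 := fun i => c_pstar d a0 a1 hv0 hv1 i
  have hcpos : ∀ i, 0 < c i := by
    intro i
    have h1 := hcp i
    have h2 : 0 < pstar d i ^ 2 := by have := pstar_pos d i; positivity
    have h3 : c i = (2/3) / pstar d i ^ 2 := (eq_div_iff (ne_of_gt h2)).mpr h1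
    rw [h3]; positivity
  have hprodc : 0 < ∏ i, c i := Finset.prod_pos (fun i _ => hcpos i)
  have hdR : (0:ℝ) < d := by exact_mod_cast (by omega : 0 < d)
  set K := Real.sqrt ((d:ℝ) ^ d * ∏ i, c i) with hKdef
  have hKpos : 0 < K := Real.sqrt_pos.mpr (by positivity)
  have hK2 : K ^ 2 = (d:ℝ) ^ d * ∏ i, c i := Real.sq_sqrt (by positivity)
  have hPst : 0 < ∏ i, pstar d i := Finset.prod_pos (fun i _ => pstar_pos d i)
  have hPq : 0 < ∏ i, q i := Finset.prod_pos (fun i _ => hq i)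
  -- Step B : 1/K ≤ minG d pstar
  have stepB : 1/K ≤ minG d (pstar d) := by
    rw [minG]
    apply le_ciInf
    intro j
    have hSpos : 0 < ∑ i, ((wvec d j i : ℝ)) ^ 2 * pstar d i ^ 2 :=
      S_pos d j (pstar d) (pstar_pos d)
    have hSle : ∑ i, ((wvec d j i : ℝ)) ^ 2 * pstar d i ^ 2 ≤ 2/3 * d := Sstar_le d hd j
    have hKP2 : (K * ∏ i, pstar d i) ^ 2 = ((2:ℝ)/3 * d) ^ d := by
      rw [mul_pow, hK2, ← Finset.prod_pow, mul_assoc, ← Finset.prod_mul_distrib,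
        Finset.prod_congr rfl (fun i _ => hcp i), Finset.prod_const, Finset.card_univ,
        Fintype.card_fin, ← mul_pow]
      ring
    have hsq : (Real.sqrt (∑ i, ((wvec d j i : ℝ)) ^ 2 * pstar d i ^ 2)) ^ d
        ≤ K * ∏ i, pstar d i := by
      apply sqrt_pow_le_of_sq _ _ hSpos.le (by positivity)
      exact le_trans (pow_le_pow_left₀ hSpos.le hSle d) (le_of_eq hKP2.symm)
    rw [G, div_le_div_iff₀ hKpos (pow_pos (Real.sqrt_pos.mpr hSpos) d), one_mul, mul_comm]
    exact hsq
  -- Step A : minG d q ≤ 1/K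
  have bddB : BddBelow (Set.range fun j : Fin d => G d q (wvec d j)) :=
    (Set.finite_range _).bddBelow
  have stepA : minG d q ≤ 1/K := by
    have main : ∀ j : Fin d,
        2/3 * (∑ i, ((wvec d a0 i : ℝ)) ^ 2 * q i ^ 2)
          + 1/3 * (∑ i, ((wvec d a1 i : ℝ)) ^ 2 * q i ^ 2)
          ≤ ∑ i, ((wvec d j i : ℝ)) ^ 2 * q i ^ 2 →
        G d q (wvec d j) ≤ 1/K := by
      intro j hj
      have hSpos : 0 < ∑ i, ((wvec d j i : ℝ)) ^ 2 * q i ^ 2 := S_pos d j q hq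
      have hA : ∑ i, c i * q i ^ 2 ≤ ∑ i, ((wvec d j i : ℝ)) ^ 2 * q i ^ 2 := by
        refine le_trans (le_of_eq ?_) hj
        rw [Finset.mul_sum, Finset.mul_sum, ← Finset.sum_add_distrib]
        exact Finset.sum_congr rfl (fun i _ => by rw [hc]; ring)
      have hAnn : 0 ≤ ∑ i, c i * q i ^ 2 :=
        Finset.sum_nonneg (fun i _ => by have := hcpos i; positivity)
      have hamgm : (d:ℝ) ^ d * ∏ i, (c i * q i ^ 2) ≤ (∑ i, c i * q i ^ 2) ^ d :=
        amgm d (by omega) _ (fun i => by have := hcpos i; positivity)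
      have h2 : (K * ∏ i, q i) ^ 2 ≤ (∑ i, ((wvec d j i : ℝ)) ^ 2 * q i ^ 2) ^ d := by
        rw [mul_pow, hK2, ← Finset.prod_pow, mul_assoc, ← Finset.prod_mul_distrib]
        exact le_trans hamgm (pow_le_pow_left₀ hAnn hA d)
      have hsq : K * ∏ i, q i
          ≤ (Real.sqrt (∑ i, ((wvec d j i : ℝ)) ^ 2 * q i ^ 2)) ^ d :=
        le_sqrt_pow_of_sq _ _ hSpos.le (by positivity) d h2
      rw [G, div_le_div_iff₀ (pow_pos (Real.sqrt_pos.mpr hSpos) d) hKpos, one_mul, mul_comm]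
      exact hsq
    have hm : ∀ j : Fin d, minG d q ≤ G d q (wvec d j) := fun j => ciInf_le bddB j
    rcases le_total (∑ i, ((wvec d a0 i : ℝ)) ^ 2 * q i ^ 2)
        (∑ i, ((wvec d a1 i : ℝ)) ^ 2 * q i ^ 2) with h | h
    · exact le_trans (hm a1) (main a1 (by linarith))
    · exact le_trans (hm a0) (main a0 (by linarith))
  linarith
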